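/- For distinct ω, σ ∈ (0, π), lim_{n→∞} (1/(n+1)) Σ_{k=0}^{n} P^T_k(ω) P^T_k(σ) = 0, where P^T_n are the rescaled orthonormal Chebyshev polynomials; consequently the functions √2 sin(ωt) for ω ∈ (0,π) are pairwise orthogonal under the Cesàro-type inner product ⟨f,g⟩ = lim_n (1/(n+1)) Σ_{k=0}^{n} K^k[f](t) K^k[g](t). -/

import Mathlib

open Filter Real

/-- The chromatic derivatives associated with recursion coefficients `γ`. -/
noncomputable def chromDeriv (γ : ℕ → ℝ) : ℕ → (ℝ → ℝ) → (ℝ → ℝ)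
  | 0, f => f
  | 1, f => fun t => (1 / γ 0) * deriv f t
  | (n + 2), f => fun t =>
      (1 / γ (n + 1)) * deriv (chromDeriv γ (n + 1) f) t +
        (γ n / γ (n + 1)) * chromDeriv γ n f t

/-- The rescaled orthonormal Chebyshev polynomials: `P^T_0 = 1`,
`P^T_n(ω) = √2 T_n(ω/π)` for `n > 0`. -/
noncomputable def chebP (n : ℕ) (ω : ℝ) : ℝ :=
  if n = 0 then 1
  else Real.sqrt 2 * (Polynomial.Chebyshev.T ℝ (n : ℤ)).eval (ω / Real.pi)

/-- Recursion coefficients of the rescaled Chebyshev polynomials: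
`γ_0 = π/√2`, `γ_n = π/2` for `n > 0`. -/
noncomputable def chebGamma (n : ℕ) : ℝ :=
  if n = 0 then Real.pi / Real.sqrt 2 else Real.pi / 2

private lemma cos_nat_mul_pi' (k : ℕ) : Real.cos ((k:ℝ) * Real.pi) = (-1:ℝ)^k := by
  induction k with
  | zero => simp
  | succ n ih =>
    have h : ((n:ℝ)+1) * Real.pi = (n:ℝ)*Real.pi + Real.pi := by ring
    push_cast
    rw [h, Real.cos_add_pi, ih]
    ring

private lemma cos_add_nat_mul_pi' (x : ℝ) (k : ℕ) :
    Real.cos (x + (k:ℝ)*Real.pi) = (-1:ℝ)^k * Real.cos x := by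
  rw [Real.cos_add, Real.sin_nat_mul_pi, cos_nat_mul_pi']
  ring

private lemma sum_cos_bound (α : ℝ) (hα : Real.sin (α/2) ≠ 0) (n : ℕ) :
    |∑ k ∈ Finset.range n, Real.cos ((k:ℝ)*α)| ≤ 1 / |Real.sin (α/2)| := by
  have key : (2 * Real.sin (α/2)) * ∑ k ∈ Finset.range n, Real.cos ((k:ℝ)*α)
      = Real.sin ((n:ℝ)*α - α/2) - Real.sin ((0:ℝ)*α - α/2) := by
    rw [Finset.mul_sum]
    have h := Finset.sum_range_sub (fun k : ℕ => Real.sin ((k:ℝ)*α - α/2)) n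
    push_cast at h ⊢
    rw [← h]
    apply Finset.sum_congr rfl
    intro k _
    have e1 : ((((k:ℝ)+1)*α - α/2) - ((k:ℝ)*α - α/2))/2 = α/2 := by ring
    have e2 : ((((k:ℝ)+1)*α - α/2) + ((k:ℝ)*α - α/2))/2 = (k:ℝ)*α := by ring
    rw [Real.sin_sub_sin, e1, e2]
  have hne : (2 : ℝ) * Real.sin (α/2) ≠ 0 := mul_ne_zero two_ne_zero hα
  have hsum : ∑ k ∈ Finset.range n, Real.cos ((k:ℝ)*α)
      = (Real.sin ((n:ℝ)*α - α/2) - Real.sin ((0:ℝ)*α - α/2)) / (2 * Real.sin (α/2)) := by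
    rw [eq_div_iff hne]
    push_cast at key
    linarith [key]
  rw [hsum, abs_div, abs_mul, abs_two]
  have hnum : |Real.sin ((n:ℝ)*α - α/2) - Real.sin ((0:ℝ)*α - α/2)| ≤ 2 := by
    have h1 := Real.abs_sin_le_one ((n:ℝ)*α - α/2)
    have h2 := Real.abs_sin_le_one ((0:ℝ)*α - α/2)
    calc |Real.sin ((n:ℝ)*α - α/2) - Real.sin ((0:ℝ)*α - α/2)|
        ≤ |Real.sin ((n:ℝ)*α - α/2)| + |Real.sin ((0:ℝ)*α - α/2)| := abs_sub _ _
      _ ≤ 2 := by linarith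
  have hpos : 0 < |Real.sin (α/2)| := abs_pos.2 hα
  calc |Real.sin ((n:ℝ)*α - α/2) - Real.sin ((0:ℝ)*α - α/2)| / (2 * |Real.sin (α/2)|)
      ≤ 2 / (2 * |Real.sin (α/2)|) := by
        exact div_le_div_of_nonneg_right hnum (by positivity)
    _ = 1 / |Real.sin (α/2)| := by field_simp

private lemma cesaro_zero (a : ℕ → ℝ) (C : ℝ)
    (h : ∀ n, |∑ k ∈ Finset.range n, a k| ≤ C) :
    Tendsto (fun n : ℕ => (1/((n:ℝ)+1)) * ∑ k ∈ Finset.range (n+1), a k) atTop (nhds 0) := by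
  apply squeeze_zero_norm (a := fun n : ℕ => C / ((n:ℝ)+1))
  · intro n
    have hn : (0:ℝ) < (n:ℝ)+1 := by positivity
    rw [Real.norm_eq_abs, abs_mul, abs_of_pos (by positivity : (0:ℝ) < 1/((n:ℝ)+1))]
    calc 1/((n:ℝ)+1) * |∑ k ∈ Finset.range (n+1), a k| ≤ 1/((n:ℝ)+1) * C :=
          mul_le_mul_of_nonneg_left (h (n+1)) (by positivity)
      _ = C / ((n:ℝ)+1) := by ring
  · have h1 : Tendsto (fun n : ℕ => ((n:ℝ)+1)) atTop atTop :=
      tendsto_atTop_add_const_right _ 1 tendsto_natCast_atTop_atTop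
    exact Tendsto.div_atTop tendsto_const_nhds h1

private lemma chebP_rec (ω : ℝ) (n : ℕ) :
    chebP (n+2) ω = (1/chebGamma (n+1)) * (ω * chebP (n+1) ω)
      - (chebGamma n / chebGamma (n+1)) * chebP n ω := by
  have h2 : Real.sqrt 2 * Real.sqrt 2 = 2 := Real.mul_self_sqrt (by norm_num)
  have hπ : Real.pi ≠ 0 := Real.pi_ne_zero
  have hs : Real.sqrt 2 ≠ 0 := by positivity
  cases n with
  | zero =>
    simp only [chebP, chebGamma, if_pos rfl, if_neg (by norm_num : (1:ℕ) ≠ 0),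
      if_neg (by norm_num : (2:ℕ) ≠ 0)]
    norm_num [Polynomial.Chebyshev.T_one, Polynomial.Chebyshev.T_two]
    field_simp
    ring_nf
    rw [Real.sq_sqrt (by norm_num : (0:ℝ) ≤ 2)]
    ring
  | succ m =>
    simp only [chebP, chebGamma, if_neg (by omega : m+1 ≠ 0), if_neg (by omega : m+2 ≠ 0),
      if_neg (by omega : m+3 ≠ 0)]
    have ht := Polynomial.Chebyshev.T_add_two ℝ ((m:ℤ)+1)
    have hev := congrArg (Polynomial.eval (ω/Real.pi)) ht
    simp only [Polynomial.eval_mul, Polynomial.eval_sub, Polynomial.eval_ofNat,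
      Polynomial.eval_X] at hev
    have hc1 : ((m+1+2 : ℕ) : ℤ) = (m:ℤ)+1+2 := by push_cast; ring
    have hc2 : ((m+1+1 : ℕ) : ℤ) = (m:ℤ)+1+1 := by push_cast; ring
    have hc3 : ((m+1 : ℕ) : ℤ) = (m:ℤ)+1 := by push_cast; ring
    rw [hc1, hc2, hc3, hev]
    field_simp

private lemma chromDeriv_sqrt2_sin (ω : ℝ) (k : ℕ) :
    chromDeriv chebGamma k (fun s => Real.sqrt 2 * Real.sin (ω*s)) =
      fun t => chebP k ω * (Real.sqrt 2 * Real.sin (ω*t + (k:ℝ)*(Real.pi/2))) := by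
  induction k using Nat.twoStepInduction with
  | zero =>
    funext t
    simp [chromDeriv, chebP]
  | one =>
    funext t
    have hd : HasDerivAt (fun s : ℝ => Real.sqrt 2 * Real.sin (ω*s))
        (Real.sqrt 2 * (Real.cos (ω*t) * (ω*1))) t :=
      (((hasDerivAt_id t).const_mul ω).sin).const_mul (Real.sqrt 2)
    show (1 / chebGamma 0) * deriv (fun s : ℝ => Real.sqrt 2 * Real.sin (ω*s)) t = _
    rw [hd.deriv]
    simp only [chebP, chebGamma, if_pos rfl, if_neg (by norm_num : (1:ℕ) ≠ 0)]
    norm_num [Polynomial.Chebyshev.T_one]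
    rw [Real.sin_add_pi_div_two]
    ring
  | more n IH1 IH2 =>
    funext t
    show (1 / chebGamma (n+1)) * deriv (chromDeriv chebGamma (n+1)
          (fun s => Real.sqrt 2 * Real.sin (ω*s))) t
        + (chebGamma n / chebGamma (n+1)) * chromDeriv chebGamma n
          (fun s => Real.sqrt 2 * Real.sin (ω*s)) t = _
    rw [IH2, IH1]
    have hd : HasDerivAt (fun t : ℝ => chebP (n+1) ω *
        (Real.sqrt 2 * Real.sin (ω*t + ((n+1:ℕ):ℝ)*(Real.pi/2))))
        (chebP (n+1) ω * (Real.sqrt 2 * (Real.cos (ω*t + ((n+1:ℕ):ℝ)*(Real.pi/2)) * (ω*1)))) t :=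
      ((((hasDerivAt_id t).const_mul ω).add_const _).sin.const_mul (Real.sqrt 2)).const_mul _
    rw [hd.deriv]
    have e1 : ω*t + ((n+1:ℕ):ℝ)*(Real.pi/2) = (ω*t + (n:ℝ)*(Real.pi/2)) + Real.pi/2 := by
      push_cast; ring
    have e2 : ω*t + ((n+2:ℕ):ℝ)*(Real.pi/2) = (ω*t + (n:ℝ)*(Real.pi/2)) + Real.pi := by
      push_cast; ring
    rw [e1, e2, Real.cos_add_pi_div_two, Real.sin_add_pi, chebP_rec]
    ring

private lemma chebP_eq_cos {ω : ℝ} (hω : ω ∈ Set.Ioo 0 Real.pi) {k : ℕ} (hk : k ≠ 0) :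
    chebP k ω = Real.sqrt 2 * Real.cos ((k:ℝ) * Real.arccos (ω/Real.pi)) := by
  obtain ⟨h0, h1⟩ := hω
  have hπ := Real.pi_pos
  have hx1 : ω / Real.pi ≤ 1 := by rw [div_le_one hπ]; linarith
  have hx0 : (-1:ℝ) ≤ ω / Real.pi := by
    have : 0 < ω / Real.pi := div_pos h0 hπ
    linarith
  unfold chebP
  rw [if_neg hk]
  congr 1
  conv_lhs => rw [← Real.cos_arccos hx0 hx1]
  rw [Polynomial.Chebyshev.T_real_cos]
  norm_num

private lemma chebP_mul_eq {ω σ : ℝ} (hω : ω ∈ Set.Ioo 0 Real.pi)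
    (hσ : σ ∈ Set.Ioo 0 Real.pi) (k : ℕ) :
    chebP k ω * chebP k σ =
      Real.cos ((k:ℝ)*(Real.arccos (ω/Real.pi) - Real.arccos (σ/Real.pi)))
      + Real.cos ((k:ℝ)*(Real.arccos (ω/Real.pi) + Real.arccos (σ/Real.pi)))
      - (if k = 0 then 1 else 0) := by
  rcases eq_or_ne k 0 with rfl | hk
  · simp [chebP]
  · rw [chebP_eq_cos hω hk, chebP_eq_cos hσ hk, if_neg hk]
    set a := (k:ℝ) * Real.arccos (ω/Real.pi)
    set b := (k:ℝ) * Real.arccos (σ/Real.pi)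
    have e1 : (k:ℝ)*(Real.arccos (ω/Real.pi) - Real.arccos (σ/Real.pi)) = a - b := by
      simp only [a, b]; ring
    have e2 : (k:ℝ)*(Real.arccos (ω/Real.pi) + Real.arccos (σ/Real.pi)) = a + b := by
      simp only [a, b]; ring
    have h2 : Real.sqrt 2 * Real.sqrt 2 = 2 := Real.mul_self_sqrt (by norm_num)
    rw [e1, e2, Real.cos_sub, Real.cos_add]
    linear_combination (Real.cos a * Real.cos b) * h2

private lemma chebP_mul_alt {ω σ : ℝ} (hω : ω ∈ Set.Ioo 0 Real.pi)
    (hσ : σ ∈ Set.Ioo 0 Real.pi) (k : ℕ) :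
    (-1:ℝ)^k * (chebP k ω * chebP k σ) =
      Real.cos ((k:ℝ)*((Real.arccos (ω/Real.pi) - Real.arccos (σ/Real.pi)) + Real.pi))
      + Real.cos ((k:ℝ)*((Real.arccos (ω/Real.pi) + Real.arccos (σ/Real.pi)) + Real.pi))
      - (if k = 0 then 1 else 0) := by
  have hc : ∀ β : ℝ, Real.cos ((k:ℝ)*(β + Real.pi)) = (-1:ℝ)^k * Real.cos ((k:ℝ)*β) := by
    intro β
    rw [show (k:ℝ)*(β + Real.pi) = (k:ℝ)*β + (k:ℝ)*Real.pi by ring, cos_add_nat_mul_pi']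
  rw [hc, hc]
  rcases eq_or_ne k 0 with rfl | hk
  · simp [chebP]
  · rw [chebP_mul_eq hω hσ k, if_neg hk]
    ring

/-- For distinct `ω, σ ∈ (0,π)` the Cesàro averages
`(1/(n+1)) Σ_{k≤n} P^T_k(ω) P^T_k(σ)` tend to `0`; consequently the functions
`√2 sin(ωt)` for `ω ∈ (0,π)` are pairwise orthogonal under the inner product
`⟨f,g⟩ = lim_n (1/(n+1)) Σ_{k≤n} K^k[f](t) K^k[g](t)` (for every `t`). -/
theorem chebP_orthogonality_cesaro
    (ω σ : ℝ) (hω : ω ∈ Set.Ioo 0 Real.pi) (hσ : σ ∈ Set.Ioo 0 Real.pi)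
    (hne : ω ≠ σ) :
    Tendsto
      (fun n : ℕ =>
        (1 / ((n : ℝ) + 1)) *
          ∑ k ∈ Finset.range (n + 1), chebP k ω * chebP k σ)
      atTop (nhds 0) ∧
    ∀ t : ℝ,
      Tendsto
        (fun n : ℕ =>
          (1 / ((n : ℝ) + 1)) *
            ∑ k ∈ Finset.range (n + 1),
              chromDeriv chebGamma k (fun s => Real.sqrt 2 * Real.sin (ω * s)) t *
                chromDeriv chebGamma k (fun s => Real.sqrt 2 * Real.sin (σ * s)) t)
        atTop (nhds 0) := by
  obtain ⟨hω0, hωπ⟩ := id hω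
  obtain ⟨hσ0, hσπ⟩ := id hσ
  have hπ := Real.pi_pos
  set A := Real.arccos (ω/Real.pi) with hAdef
  set B := Real.arccos (σ/Real.pi) with hBdef
  have hxω0 : 0 < ω/Real.pi := div_pos hω0 hπ
  have hxω1 : ω/Real.pi < 1 := (div_lt_one hπ).2 hωπ
  have hxσ0 : 0 < σ/Real.pi := div_pos hσ0 hπ
  have hxσ1 : σ/Real.pi < 1 := (div_lt_one hπ).2 hσπ
  have hA1 : 0 < A := Real.arccos_pos.2 hxω1
  have hA2 : A < Real.pi/2 := Real.arccos_lt_pi_div_two.2 hxω0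
  have hB1 : 0 < B := Real.arccos_pos.2 hxσ1
  have hB2 : B < Real.pi/2 := Real.arccos_lt_pi_div_two.2 hxσ0
  have hAB : A ≠ B := by
    intro h
    apply hne
    have hc := congrArg Real.cos h
    rw [hAdef, hBdef, Real.cos_arccos (by linarith) (le_of_lt hxω1),
      Real.cos_arccos (by linarith) (le_of_lt hxσ1)] at hc
    field_simp at hc
    exact hc
  have hsin : ∀ x : ℝ, x ≠ 0 → |x| < Real.pi → Real.sin x ≠ 0 := by
    intro x hx hxπ
    rcases lt_or_gt_of_ne hx with h | h
    · have habs : -x < Real.pi := by rw [abs_of_neg h] at hxπ; linarith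
      have := Real.sin_pos_of_pos_of_lt_pi (by linarith : 0 < -x) habs
      rw [Real.sin_neg] at this; linarith
    · have habs : x < Real.pi := by rw [abs_of_pos h] at hxπ; linarith
      have := Real.sin_pos_of_pos_of_lt_pi h habs
      linarith
  have hs1 : Real.sin ((A - B)/2) ≠ 0 := by
    apply hsin
    · intro h; exact hAB (by linarith [h] ; )
    · rw [abs_lt]; constructor <;> linarith
  have hs2 : Real.sin ((A + B)/2) ≠ 0 :=
    ne_of_gt (Real.sin_pos_of_pos_of_lt_pi (by linarith) (by linarith))
  have hs3 : Real.sin (((A - B) + Real.pi)/2) ≠ 0 :=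
    ne_of_gt (Real.sin_pos_of_pos_of_lt_pi (by linarith) (by linarith))
  have hs4 : Real.sin (((A + B) + Real.pi)/2) ≠ 0 :=
    ne_of_gt (Real.sin_pos_of_pos_of_lt_pi (by linarith) (by linarith))
  -- bound on partial sums of the products
  have hb : ∀ n : ℕ, |∑ k ∈ Finset.range n, chebP k ω * chebP k σ| ≤
      1/|Real.sin ((A-B)/2)| + 1/|Real.sin ((A+B)/2)| + 1 := by
    intro n
    have hrw : ∑ k ∈ Finset.range n, chebP k ω * chebP k σ
        = ((∑ k ∈ Finset.range n, Real.cos ((k:ℝ)*(A-B)))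
          + ∑ k ∈ Finset.range n, Real.cos ((k:ℝ)*(A+B)))
          - ∑ k ∈ Finset.range n, (if k = 0 then (1:ℝ) else 0) := by
      rw [← Finset.sum_add_distrib, ← Finset.sum_sub_distrib]
      exact Finset.sum_congr rfl (fun k _ => chebP_mul_eq hω hσ k)
    rw [hrw]
    have i1 := sum_cos_bound (A-B) hs1 n
    have i2 := sum_cos_bound (A+B) hs2 n
    have i3 : |∑ k ∈ Finset.range n, (if k = 0 then (1:ℝ) else 0)| ≤ 1 := by
      rw [Finset.sum_ite_eq' (Finset.range n) 0 (fun _ => (1:ℝ))]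
      split_ifs <;> norm_num
    set X := ∑ k ∈ Finset.range n, Real.cos ((k:ℝ)*(A-B))
    set Y := ∑ k ∈ Finset.range n, Real.cos ((k:ℝ)*(A+B))
    set Z := ∑ k ∈ Finset.range n, (if k = 0 then (1:ℝ) else 0)
    calc |X + Y - Z| ≤ |X + Y| + |Z| := abs_sub _ _
      _ ≤ (|X| + |Y|) + |Z| := add_le_add_left (abs_add_le _ _) _
      _ ≤ 1/|Real.sin ((A-B)/2)| + 1/|Real.sin ((A+B)/2)| + 1 := by linarith
  have hcb : ∀ n : ℕ, |∑ k ∈ Finset.range n, (-1:ℝ)^k * (chebP k ω * chebP k σ)| ≤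
      1/|Real.sin (((A-B)+Real.pi)/2)| + 1/|Real.sin (((A+B)+Real.pi)/2)| + 1 := by
    intro n
    have hrw : ∑ k ∈ Finset.range n, (-1:ℝ)^k * (chebP k ω * chebP k σ)
        = ((∑ k ∈ Finset.range n, Real.cos ((k:ℝ)*((A-B)+Real.pi)))
          + ∑ k ∈ Finset.range n, Real.cos ((k:ℝ)*((A+B)+Real.pi)))
          - ∑ k ∈ Finset.range n, (if k = 0 then (1:ℝ) else 0) := by
      rw [← Finset.sum_add_distrib, ← Finset.sum_sub_distrib]
      exact Finset.sum_congr rfl (fun k _ => chebP_mul_alt hω hσ k)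
    rw [hrw]
    have i1 := sum_cos_bound ((A-B)+Real.pi) hs3 n
    have i2 := sum_cos_bound ((A+B)+Real.pi) hs4 n
    have i3 : |∑ k ∈ Finset.range n, (if k = 0 then (1:ℝ) else 0)| ≤ 1 := by
      rw [Finset.sum_ite_eq' (Finset.range n) 0 (fun _ => (1:ℝ))]
      split_ifs <;> norm_num
    set X := ∑ k ∈ Finset.range n, Real.cos ((k:ℝ)*((A-B)+Real.pi))
    set Y := ∑ k ∈ Finset.range n, Real.cos ((k:ℝ)*((A+B)+Real.pi))
    set Z := ∑ k ∈ Finset.range n, (if k = 0 then (1:ℝ) else 0)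
    calc |X + Y - Z| ≤ |X + Y| + |Z| := abs_sub _ _
      _ ≤ (|X| + |Y|) + |Z| := add_le_add_left (abs_add_le _ _) _
      _ ≤ 1/|Real.sin (((A-B)+Real.pi)/2)| + 1/|Real.sin (((A+B)+Real.pi)/2)| + 1 := by
        linarith
  have h1 := cesaro_zero _ _ hb
  have hAlt := cesaro_zero _ _ hcb
  refine ⟨h1, ?_⟩
  intro t
  have h2 : Real.sqrt 2 * Real.sqrt 2 = 2 := Real.mul_self_sqrt (by norm_num)
  have hkey : ∀ k : ℕ,
      chromDeriv chebGamma k (fun s => Real.sqrt 2 * Real.sin (ω * s)) t *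
        chromDeriv chebGamma k (fun s => Real.sqrt 2 * Real.sin (σ * s)) t
      = Real.cos ((ω-σ)*t) * (chebP k ω * chebP k σ)
        - Real.cos ((ω+σ)*t) * ((-1:ℝ)^k * (chebP k ω * chebP k σ)) := by
    intro k
    rw [chromDeriv_sqrt2_sin ω k, chromDeriv_sqrt2_sin σ k]
    have expand : Real.cos ((ω-σ)*t) - (-1:ℝ)^k * Real.cos ((ω+σ)*t)
        = 2 * Real.sin (ω*t + (k:ℝ)*(Real.pi/2)) * Real.sin (σ*t + (k:ℝ)*(Real.pi/2)) := by
      have key2 : ∀ a b : ℝ, Real.cos (a - b) - Real.cos (a + b)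
          = 2 * Real.sin a * Real.sin b := by
        intro a b; rw [Real.cos_sub, Real.cos_add]; ring
      rw [← cos_add_nat_mul_pi' ((ω+σ)*t) k,
        show (ω-σ)*t = (ω*t + (k:ℝ)*(Real.pi/2)) - (σ*t + (k:ℝ)*(Real.pi/2)) by ring,
        show (ω+σ)*t + (k:ℝ)*Real.pi
          = (ω*t + (k:ℝ)*(Real.pi/2)) + (σ*t + (k:ℝ)*(Real.pi/2)) by ring]
      exact key2 _ _
    have hrhs : Real.cos ((ω-σ)*t) * (chebP k ω * chebP k σ)
        - Real.cos ((ω+σ)*t) * ((-1:ℝ)^k * (chebP k ω * chebP k σ))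
        = (chebP k ω * chebP k σ) *
          (2 * Real.sin (ω*t + (k:ℝ)*(Real.pi/2)) * Real.sin (σ*t + (k:ℝ)*(Real.pi/2))) := by
      rw [← expand]; ring
    rw [hrhs]
    linear_combination (chebP k ω * chebP k σ *
      (Real.sin (ω*t + (k:ℝ)*(Real.pi/2)) * Real.sin (σ*t + (k:ℝ)*(Real.pi/2)))) * h2
  have heq : (fun n : ℕ =>
        (1 / ((n : ℝ) + 1)) *
          ∑ k ∈ Finset.range (n + 1),
            chromDeriv chebGamma k (fun s => Real.sqrt 2 * Real.sin (ω * s)) t *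
              chromDeriv chebGamma k (fun s => Real.sqrt 2 * Real.sin (σ * s)) t)
      = fun n : ℕ =>
        Real.cos ((ω-σ)*t) *
          ((1/((n:ℝ)+1)) * ∑ k ∈ Finset.range (n+1), chebP k ω * chebP k σ)
        - Real.cos ((ω+σ)*t) *
          ((1/((n:ℝ)+1)) * ∑ k ∈ Finset.range (n+1), (-1:ℝ)^k * (chebP k ω * chebP k σ)) := by
    funext n
    rw [Finset.sum_congr rfl (fun k _ => hkey k), Finset.sum_sub_distrib,
      ← Finset.mul_sum, ← Finset.mul_sum]
    ring
  rw [heq]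
  have hfin := (h1.const_mul (Real.cos ((ω-σ)*t))).sub (hAlt.const_mul (Real.cos ((ω+σ)*t)))
  simpa using hfin
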